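/- Let $R = \hat{R}_0 = R_0[\zeta]$ where $R_0$ is a commutative ring and $\hat{R}_0$ is free as an $R_0$-module. Let $G$ be a finite group and $e \in R_0 G$ an idempotent. If $1 \in \hat{R}_0 G \cdot e \cdot \hat{R}_0 G$, then $1 \in R_0 G \cdot e \cdot R_0 G$; i.e., fullness of $e$ over the free extension $\hat{R}_0$ implies fullness over $R_0$. -/

import Mathlib

/-- The ring homomorphism `R₀G → RG` on group algebras induced by a ring
homomorphism `R₀ → R` on coefficients. -/
noncomputable def groupAlgebraBaseChange {R₀ R : Type*} [CommRing R₀] [CommRing R]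
    (f : R₀ →+* R) (G : Type*) [Group G] :
    MonoidAlgebra R₀ G →+* MonoidAlgebra R G :=
  MonoidAlgebra.liftNCRingHom (MonoidAlgebra.singleOneRingHom.comp f)
    (MonoidAlgebra.of R G) (fun x y => by
      show MonoidAlgebra.single (1 : G) (f x) * MonoidAlgebra.single y 1 =
        MonoidAlgebra.single y 1 * MonoidAlgebra.single (1 : G) (f x)
      simp [MonoidAlgebra.single_mul_single])


lemma groupAlgebraBaseChange_single {R₀ R : Type*} [CommRing R₀] [CommRing R]
    (f : R₀ →+* R) {G : Type*} [Group G] (g : G) (c : R₀) :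
    groupAlgebraBaseChange f G (MonoidAlgebra.single g c) = MonoidAlgebra.single g (f c) := by
  unfold groupAlgebraBaseChange
  show MonoidAlgebra.liftNC _ _ (MonoidAlgebra.single g c) = _
  rw [MonoidAlgebra.liftNC_single]
  show MonoidAlgebra.single 1 (f c) * MonoidAlgebra.single g 1 = _
  simp [MonoidAlgebra.single_mul_single]

/-- let `Rh₀` be a commutative `R₀`-algebra which is free as an
`R₀`-module, with a basis containing `1`.  If an idempotent `e ∈ R₀G` becomes full
in `Rh₀G` (i.e. `1 ∈ Rh₀G · e · Rh₀G`), then `e` is already full in `R₀G`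
(i.e. `1 ∈ R₀G · e · R₀G`). -/
theorem full_descends_along_free_extension {R₀ Rh G : Type*} [CommRing R₀] [CommRing Rh]
    [Algebra R₀ Rh] [Group G] [Fintype G]
    {ι : Type*} (b : Module.Basis ι R₀ Rh) (i₀ : ι) (hb : b i₀ = 1)
    (e : MonoidAlgebra R₀ G) (he : IsIdempotentElem e)
    (hfull : TwoSidedIdeal.span {groupAlgebraBaseChange (algebraMap R₀ Rh) G e} =
      (⊤ : TwoSidedIdeal (MonoidAlgebra Rh G))) :
    TwoSidedIdeal.span {e} = (⊤ : TwoSidedIdeal (MonoidAlgebra R₀ G)) := by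
  classical
  set F := groupAlgebraBaseChange (algebraMap R₀ Rh) G with hF
  set π : Rh →ₗ[R₀] R₀ := b.coord i₀ with hπ
  set P : MonoidAlgebra Rh G →+ MonoidAlgebra R₀ G :=
    MonoidAlgebra.coeffAddEquiv.symm.toAddMonoidHom.comp
      ((Finsupp.mapRange.addMonoidHom π.toAddMonoidHom).comp
        MonoidAlgebra.coeffAddEquiv.toAddMonoidHom) with hP
  set I := TwoSidedIdeal.span ({e} : Set (MonoidAlgebra R₀ G)) with hI
  have heI : e ∈ I := TwoSidedIdeal.subset_span rfl
  have key : ∀ (r : Rh) (z : MonoidAlgebra R₀ G), P (r • F z) = π r • z := by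
    intro r z
    induction z using MonoidAlgebra.induction_linear with
    | zero => simp
    | add u v hu hv => rw [map_add, smul_add, map_add, hu, hv, smul_add]
    | single g c =>
        rw [hF, groupAlgebraBaseChange_single]
        have hcoef : π (r • algebraMap R₀ Rh c) = π r • c := by
          rw [smul_eq_mul, show r * algebraMap R₀ Rh c = c • r by
            rw [Algebra.smul_def]; ring, map_smul]
          simp [mul_comm]
        ext g'
        show π ((r • MonoidAlgebra.single g (algebraMap R₀ Rh c)).coeff g') =
          (π r • MonoidAlgebra.single g c).coeff g'
        rw [MonoidAlgebra.smul_single, MonoidAlgebra.smul_single, MonoidAlgebra.coeff_single_apply,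
          MonoidAlgebra.coeff_single_apply]
        split_ifs with h
        · exact hcoef
        · exact map_zero π
  have hπone : π (1 : Rh) = 1 := by
    rw [← hb, hπ]; simp
  -- The two-sided ideal J of Rh G
  set Jc : Set (MonoidAlgebra Rh G) :=
    {x | ∀ (a c : MonoidAlgebra R₀ G) (r : Rh), P (F a * (r • x) * F c) ∈ I} with hJc
  have smul_memJ : ∀ (s : Rh) {x}, x ∈ Jc → s • x ∈ Jc := by
    intro s x hx a c r
    rw [smul_smul]
    exact hx a c (r * s)
  have add_memJ : ∀ {x y}, x ∈ Jc → y ∈ Jc → x + y ∈ Jc := by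
    intro x y hx hy a c r
    rw [smul_add, mul_add, add_mul, map_add]
    exact I.add_mem (hx a c r) (hy a c r)
  have hFof : ∀ g : G, F (MonoidAlgebra.of R₀ G g) = MonoidAlgebra.of Rh G g := by
    intro g
    rw [hF]
    show groupAlgebraBaseChange (algebraMap R₀ Rh) G (MonoidAlgebra.single g 1) = _
    rw [groupAlgebraBaseChange_single, map_one]
    rfl
  have mul_left : ∀ {x y}, y ∈ Jc → x * y ∈ Jc := by
    intro x y hy
    induction x using MonoidAlgebra.induction_on with
    | of g =>
        intro a c r
        have : F a * (r • (MonoidAlgebra.of Rh G g * y)) * F c =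
            F (a * MonoidAlgebra.of R₀ G g) * (r • y) * F c := by
          simp only [map_mul, hFof, smul_mul_assoc, ← mul_smul_comm, mul_assoc]
        rw [this]
        exact hy _ c r
    | add u v hu hv => rw [add_mul]; exact add_memJ hu hv
    | smul s u hu => rw [smul_mul_assoc]; exact smul_memJ s hu
  have mul_right : ∀ {x y}, x ∈ Jc → x * y ∈ Jc := by
    intro x y hx
    induction y using MonoidAlgebra.induction_on with
    | of g =>
        intro a c r
        have : F a * (r • (x * MonoidAlgebra.of Rh G g)) * F c =
            F a * (r • x) * F (MonoidAlgebra.of R₀ G g * c) := by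
          simp only [map_mul, hFof, smul_mul_assoc, ← mul_smul_comm, mul_assoc]
        rw [this]
        exact hx a _ r
    | add u v hu hv => rw [mul_add]; exact add_memJ hu hv
    | smul s u hu => rw [mul_smul_comm]; exact smul_memJ s hu
  have zero_memJ : (0 : MonoidAlgebra Rh G) ∈ Jc := by
    intro a c r
    rw [smul_zero, mul_zero, zero_mul, map_zero]
    exact I.zero_mem
  have neg_memJ : ∀ {x}, x ∈ Jc → -x ∈ Jc := by
    intro x hx a c r
    rw [smul_neg, mul_neg, neg_mul, map_neg]
    exact I.neg_mem (hx a c r)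
  set J : TwoSidedIdeal (MonoidAlgebra Rh G) :=
    TwoSidedIdeal.mk' Jc zero_memJ add_memJ neg_memJ mul_left mul_right with hJ
  have hFeJ : F e ∈ Jc := by
    intro a c r
    have : F a * (r • F e) * F c = r • F (a * e * c) := by
      rw [map_mul, map_mul, mul_smul_comm, smul_mul_assoc]
    rw [this, key]
    have h2 : π r • (a * e * c) = (π r • a) * (e * c) := by
      rw [smul_mul_assoc, ← mul_assoc]
    rw [h2]
    exact I.mul_mem_left _ _ (I.mul_mem_right _ _ heI)
  have h1J : (1 : MonoidAlgebra Rh G) ∈ J := by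
    have h1 : (1 : MonoidAlgebra Rh G) ∈ TwoSidedIdeal.span {F e} := by
      rw [hfull]; trivial
    refine TwoSidedIdeal.mem_span_iff.mp h1 J ?_
    intro x hx
    rw [Set.mem_singleton_iff] at hx
    subst hx
    show F e ∈ J
    rw [hJ, TwoSidedIdeal.mem_mk']
    exact hFeJ
  have h1c : (1 : MonoidAlgebra Rh G) ∈ Jc := by
    rw [hJ, TwoSidedIdeal.mem_mk'] at h1J; exact h1J
  have hfin := h1c 1 1 1
  rw [map_one, one_smul, one_mul, mul_one] at hfin
  have hP1 : P (1 : MonoidAlgebra Rh G) = 1 := by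
    have hk := key 1 1
    rwa [map_one, one_smul, hπone, one_smul] at hk
  rw [hP1] at hfin
  exact I.eq_top hfin
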